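/- Let D be a triangulated category and let D₁ ⊆ D be a full triangulated subcategory whose inclusion functor i_* : D₁ → D (fully faithful) admits a left adjoint i^*. Then the inclusion functor j_! : ⊥D₁ → D of the left orthogonal admits a right adjoint j^*, and for every object A of D there is a distinguished triangle j_! j^* A → A → i_* i^* A → (j_! j^* A)[1], functorial in A, whose second map is the unit of the adjunction i^* ⊣ i_* and whose first map is the counit of the adjunction j_! ⊣ j^*. -/

import Mathlib

/-!
STATEMENT 0: If `D₁ ⊆ D` is a full triangulated subcategory whose (fully faithful)
inclusion `i_* : D₁ → D` admits a left adjoint `i^*`, then the inclusion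
`j_! : ⊥D₁ → D` of the left orthogonal admits a right adjoint `j^*`, and for every
`A` there is a distinguished triangle `j_! j^* A → A → i_* i^* A → (j_! j^* A)[1]`,
functorial in `A`, whose second map is the unit of `i^* ⊣ i_*` and whose first map
is the counit of `j_! ⊣ j^*`.

The full triangulated subcategory `D₁` is encoded by a predicate `P` on objects,
closed under isomorphism, zero objects, shifts, and extensions; the inclusion is
`ObjectProperty.ι P` (which is fully faithful), and the left adjoint is
given as an adjunction `adji : istar ⊣ ObjectProperty.ι P`.
The left orthogonal `⊥D₁` is the full subcategory of objects `A` with every map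
`A ⟶ B`, `B ∈ D₁`, zero.  Functoriality of the triangles is encoded by asking for
the connecting maps to form a natural transformation `δ`.
-/

open CategoryTheory CategoryTheory.Limits CategoryTheory.Pretriangulated

noncomputable section

universe v u

theorem gluing_triangle_left_adjoint
    {D : Type u} [Category.{v} D] [Preadditive D] [HasZeroObject D] [HasShift D ℤ]
    [∀ n : ℤ, (CategoryTheory.shiftFunctor D n).Additive] [Pretriangulated D]
    [IsTriangulated D]
    (P : D → Prop)
    (hP_zero : ∀ X : D, IsZero X → P X)
    (hP_iso : ∀ {X Y : D}, (X ≅ Y) → P X → P Y)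
    (hP_shift : ∀ (X : D) (n : ℤ), P X → P (X⟦n⟧))
    (hP_ext : ∀ T ∈ distTriang D, P T.obj₁ → P T.obj₃ → P T.obj₂)
    (istar : D ⥤ ObjectProperty.FullSubcategory P)
    (adji : istar ⊣ ObjectProperty.ι P) :
    ∃ (jstar : D ⥤ ObjectProperty.FullSubcategory fun A : D => ∀ B : D, P B → ∀ f : A ⟶ B, f = 0)
      (adjj : ObjectProperty.ι (fun A : D => ∀ B : D, P B → ∀ f : A ⟶ B, f = 0) ⊣ jstar)
      (δ : istar ⋙ ObjectProperty.ι P ⟶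
        (jstar ⋙ ObjectProperty.ι
            (fun A : D => ∀ B : D, P B → ∀ f : A ⟶ B, f = 0)) ⋙
          CategoryTheory.shiftFunctor D (1 : ℤ)),
      ∀ A : D,
        Triangle.mk (adjj.counit.app A) (adji.unit.app A) (δ.app A) ∈ distTriang D := by
  classical
  -- precomposition with the unit is bijective on maps into `D₁`
  have hηsurj : ∀ (A X : D), P X → ∀ h : A ⟶ X,
      ∃ k : (ObjectProperty.ι P).obj (istar.obj A) ⟶ X,
        h = adji.unit.app A ≫ k := by
    intro A X hX h
    refine ⟨((adji.homEquiv A ⟨X, hX⟩).symm h).hom, ?_⟩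
    have := (adji.homEquiv A ⟨X, hX⟩).apply_symm_apply h
    rw [Adjunction.homEquiv_unit] at this
    exact this.symm
  have hηinj : ∀ (A X : D) (hX : P X)
      (k k' : (ObjectProperty.ι P).obj (istar.obj A) ⟶ X),
      adji.unit.app A ≫ k = adji.unit.app A ≫ k' → k = k' := by
    intro A X hX k k' hkk
    refine congrArg (fun f => f.hom) ((adji.homEquiv A ⟨X, hX⟩).injective (a₁ := ObjectProperty.homMk k) (a₂ := ObjectProperty.homMk k') ?_)
    rw [Adjunction.homEquiv_unit, Adjunction.homEquiv_unit]
    exact hkk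
  -- choose distinguished triangles `Cc A → A → i i* A → (Cc A)[1]`
  have hmain : ∀ A : D, ∃ (X : D) (f : X ⟶ A)
      (h : (ObjectProperty.ι P).obj (istar.obj A) ⟶ X⟦(1 : ℤ)⟧),
      Triangle.mk f (adji.unit.app A) h ∈ distTriang D :=
    fun A => distinguished_cocone_triangle₁ (adji.unit.app A)
  choose Cc p δ₀ hT using hmain
  -- each `Cc A` lies in the left orthogonal
  have hCc : ∀ (A B : D), P B → ∀ f : Cc A ⟶ B, f = 0 := by
    intro A B hB f
    have h1 : δ₀ A ≫ f⟦(1 : ℤ)⟧' = 0 := by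
      refine hηinj A (B⟦(1 : ℤ)⟧) (hP_shift B 1 hB) _ 0 ?_
      rw [comp_zero, ← Category.assoc]
      have h2 := comp_distTriang_mor_zero₂₃ _ (hT A)
      change adji.unit.app A ≫ δ₀ A = 0 at h2
      rw [h2, zero_comp]
    obtain ⟨g, hg⟩ := Triangle.yoneda_exact₃ _ (rot_of_distTriang _ (hT A))
      (f⟦(1 : ℤ)⟧') h1
    simp only [Triangle.rotate, Triangle.mk_mor₁, Triangle.mk_mor₃] at hg
    obtain ⟨k, hk⟩ := hηsurj A B hB ((shiftFunctor D (1 : ℤ)).preimage g)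
    have hf : f = -(p A ≫ adji.unit.app A ≫ k) := by
      apply (shiftFunctor D (1 : ℤ)).map_injective
      refine hg.trans ?_
      have : g = ((shiftFunctor D (1 : ℤ)).preimage g)⟦(1 : ℤ)⟧' :=
        ((shiftFunctor D (1 : ℤ)).map_preimage g).symm
      rw [this, ← hk]
      rw [Functor.map_neg, Functor.map_comp]
      exact Preadditive.neg_comp _ _
    have h2 := comp_distTriang_mor_zero₁₂ _ (hT A)
    change p A ≫ adji.unit.app A = 0 at h2
    rw [hf, ← Category.assoc, h2, zero_comp, neg_zero]
  let Q : D → Prop := fun A : D => ∀ B : D, P B → ∀ f : A ⟶ B, f = 0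
  let GObj : D → ObjectProperty.FullSubcategory Q := fun A => ⟨Cc A, hCc A⟩
  let φ : ∀ (A : D) (X : ObjectProperty.FullSubcategory Q), (X.obj ⟶ Cc A) → (X.obj ⟶ A) :=
    fun A X g => g ≫ p A
  have hφ : ∀ A X, Function.Bijective (φ A X) := by
    intro A X
    constructor
    · intro g g' hgg
      have hsub : (g - g') ≫ p A = 0 := by
        rw [Preadditive.sub_comp, sub_eq_zero]
        exact hgg
      obtain ⟨h, hh⟩ := Triangle.coyoneda_exact₂ _ (inv_rot_of_distTriang _ (hT A))
        (g - g') hsub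
      have hz : h = 0 :=
        X.property _ (hP_shift _ (-1) (istar.obj A).property) h
      rw [hz, zero_comp] at hh
      exact sub_eq_zero.mp hh
    · intro f
      have hz : f ≫ adji.unit.app A = 0 :=
        X.property _ (istar.obj A).property _
      obtain ⟨g, hg⟩ := Triangle.coyoneda_exact₂ _ (hT A) f hz
      exact ⟨g, hg.symm⟩
  let e : ∀ (X : ObjectProperty.FullSubcategory Q) (A : D),
      ((ObjectProperty.ι Q).obj X ⟶ A) ≃ (X ⟶ GObj A) :=
    fun X A => (Equiv.ofBijective (φ A X) (hφ A X)).symm.trans ({ toFun := fun f => ObjectProperty.homMk f, invFun := fun f => f.hom, left_inv := fun _ => rfl, right_inv := fun _ => rfl } : (X.obj ⟶ Cc A) ≃ (X ⟶ GObj A))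
  have hecomp : ∀ (X : ObjectProperty.FullSubcategory Q) (A : D)
      (g : (ObjectProperty.ι Q).obj X ⟶ A),
      (show X.obj ⟶ Cc A from (e X A g).hom) ≫ p A = g :=
    fun X A g => (e X A).symm_apply_apply g
  have he : ∀ (X' X : ObjectProperty.FullSubcategory Q) (A : D) (f : X' ⟶ X)
      (g : (ObjectProperty.ι Q).obj X ⟶ A),
      e X' A ((ObjectProperty.ι Q).map f ≫ g) = f ≫ e X A g := by
    intro X' X A f g
    apply (e X' A).symm.injective
    rw [Equiv.symm_apply_apply]
    show (show X'.obj ⟶ X.obj from f.hom) ≫ g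
      = ((show X'.obj ⟶ X.obj from f.hom) ≫ (show X.obj ⟶ Cc A from (e X A g).hom)) ≫ p A
    rw [Category.assoc, hecomp]
  let jstar : D ⥤ ObjectProperty.FullSubcategory Q := Adjunction.rightAdjointOfEquiv e he
  let adjj : ObjectProperty.ι Q ⊣ jstar := Adjunction.adjunctionOfEquivRight e he
  have hcounit : ∀ A : D, adjj.counit.app A = p A := by
    intro A
    show (𝟙 (Cc A) : Cc A ⟶ Cc A) ≫ p A = p A
    rw [Category.id_comp]
  -- the map induced by `jstar` on objects is compatible with `p`
  have hm : ∀ {A A' : D} (α : A ⟶ A'),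
      (show Cc A ⟶ Cc A' from (jstar.map α).hom) ≫ p A' = p A ≫ α := by
    intro A A' α
    have := adjj.counit.naturality α
    dsimp at this
    rw [hcounit, hcounit] at this
    exact this
  -- naturality of the connecting maps
  have hδnat : ∀ {A A' : D} (α : A ⟶ A'),
      (ObjectProperty.ι P).map (istar.map α) ≫ δ₀ A' =
        δ₀ A ≫ (show Cc A ⟶ Cc A' from (jstar.map α).hom)⟦(1 : ℤ)⟧' := by
    intro A A' α
    obtain ⟨c, hc1, hc2⟩ := complete_distinguished_triangle_morphism _ _
      (hT A) (hT A') (show Cc A ⟶ Cc A' from (jstar.map α).hom) α (hm α).symm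
    dsimp at hc1 hc2
    have hcval : c = (ObjectProperty.ι P).map (istar.map α) := by
      refine hηinj A _ (istar.obj A').property _ _ ?_
      refine hc1.trans ?_
      exact adji.unit.naturality α
    rw [hcval] at hc2
    exact hc2.symm
  refine ⟨jstar, adjj, ⟨fun A => δ₀ A, ?_⟩, ?_⟩
  · intro A A' α
    exact hδnat α
  · intro A
    have hmor : Triangle.mk (adjj.counit.app A) (adji.unit.app A) (δ₀ A)
        = Triangle.mk (p A) (adji.unit.app A) (δ₀ A) := by
      rw [hcounit A]
    exact hmor ▸ hT A

end
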